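/- Let M be a full positive definite integral lattice on a quadratic space (V, q) over ℚ with an automorphism σ of odd prime order p, let V₀ be the fixed space of σ, M₀ = M ∩ V₀, and let n ≥ 1. Then for every symmetric n × n integer matrix S one has the congruence A(M,S) ≡ A(M₀,S) (mod p), where A(L,S) = #{(x₁,…,x_n) ∈ L^n : b(x_i,x_j) = S_{ij}} and S is assumed positive definite (so both counts are finite). -/

import Mathlib

section Aux

open QuadraticMap

variable {V : Type*} [AddCommGroup V] [Module ℚ V]

/-- Cauchy–Schwarz for a positive (semi)definite rational quadratic form. -/
lemma polar_sq_le (q : QuadraticForm ℚ V) (hq : ∀ v : V, v ≠ 0 → 0 < q v) (x y : V) :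
    (polar q x y) ^ 2 ≤ 4 * q x * q y := by
  have hq0 : ∀ v : V, 0 ≤ q v := by
    intro v
    rcases eq_or_ne v 0 with rfl | h
    · simp
    · exact (hq v h).le
  rcases eq_or_ne y 0 with rfl | hy
  · simp [polar]
  · have hqy : 0 < q y := hq y hy
    set t : ℚ := -(polar q x y / (2 * q y)) with ht
    have h0 : 0 ≤ q (x + t • y) := hq0 _
    have hexp : q (x + t • y) = q x + t * polar q x y + t * t * q y := by
      have h1 : polar q x (t • y) = t * polar q x y := polar_smul_right q t x y
      have h2 : q (t • y) = t * t * q y := q.map_smul t y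
      have := polar q x (t • y)
      simp only [polar] at h1 ⊢
      nlinarith [h1, h2]
    rw [hexp] at h0
    have hkey : (q x + t * polar q x y + t * t * q y) * (4 * q y)
        = 4 * q x * q y - (polar q x y) ^ 2 := by
      rw [ht]
      field_simp
      ring
    nlinarith [mul_nonneg h0 (by positivity : (0:ℚ) ≤ 4 * q y)]

lemma int_sq_le_finite (C : ℚ) : {a : ℤ | (a : ℚ) ^ 2 ≤ C}.Finite := by
  have hsub : {a : ℤ | (a : ℚ) ^ 2 ≤ C} ⊆ Set.Icc (-(max 1 ⌈C⌉)) (max 1 ⌈C⌉) := by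
    intro a ha
    simp only [Set.mem_setOf_eq] at ha
    have h1 : (a : ℚ) ^ 2 ≤ (⌈C⌉ : ℚ) := ha.trans (Int.le_ceil C)
    have h2 : (a : ℤ) ^ 2 ≤ ⌈C⌉ := by exact_mod_cast h1
    have habs : |a| ≤ max 1 ⌈C⌉ := by
      rcases le_or_gt (|a|) 1 with h | h
      · exact h.trans (le_max_left _ _)
      · have : |a| ≤ a ^ 2 := by nlinarith [abs_nonneg a, sq_abs a]
        exact this.trans (h2.trans (le_max_right _ _))
    exact Set.mem_Icc.2 (abs_le.mp habs)
  exact (Set.finite_Icc _ _).subset hsub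

lemma lattice_finite [FiniteDimensional ℚ V]
    (q : QuadraticForm ℚ V) (hqpos : ∀ v : V, v ≠ 0 → 0 < q v)
    (M : Submodule ℤ V) (hMfg : M.FG) (hMfull : Submodule.span ℚ (M : Set V) = ⊤)
    (c : ℚ) : {v : V | v ∈ M ∧ q v ≤ c}.Finite := by
  classical
  have hq0 : ∀ v : V, 0 ≤ q v := by
    intro v
    rcases eq_or_ne v 0 with rfl | h
    · simp
    · exact (hqpos v h).le
  haveI : Module.Finite ℤ M := Module.Finite.iff_fg.2 hMfg
  haveI : Module.IsTorsionFree ℤ V := Module.IsTorsionFree.trans_faithfulSMul ℤ ℚ V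
  haveI : Module.Free ℤ M := Module.free_of_finite_type_torsion_free'
  set ι := Module.Free.ChooseBasisIndex ℤ M
  set bM : Module.Basis ι ℤ M := Module.Free.chooseBasis ℤ M
  set e : ι → V := fun i => (bM i : V) with he
  -- e is ℚ-linearly independent
  have hliZ : LinearIndependent ℤ e := by
    have := bM.linearIndependent
    exact this.map' M.subtype (Submodule.ker_subtype M)
  have hliQ : LinearIndependent ℚ e := (LinearIndependent.iff_fractionRing ℤ ℚ).1 hliZ
  -- e spans V over ℚ
  have hspanZ : Submodule.span ℤ (Set.range e) = M := by
    have : Submodule.map M.subtype (Submodule.span ℤ (Set.range bM)) =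
        Submodule.span ℤ (Set.range e) := by
      rw [Submodule.map_span]
      congr 1
      rw [← Set.range_comp]
      rfl
    rw [bM.span_eq, Submodule.map_top, Submodule.range_subtype] at this
    exact this.symm
  have hspanQ : ⊤ ≤ Submodule.span ℚ (Set.range e) := by
    rw [← hMfull]
    apply Submodule.span_le.2
    intro v hv
    have : v ∈ Submodule.span ℤ (Set.range e) := hspanZ ▸ hv
    exact Submodule.span_subset_span ℤ ℚ _ this
  set bV : Module.Basis ι ℚ V := Module.Basis.mk hliQ hspanQ with hbV
  set B := q.polarBilin with hB
  have hBnd : LinearMap.BilinForm.Nondegenerate B := (fun (h : ∀ m : V, B m m = 0 → m = 0) =>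
      ⟨fun m hm => h m (hm m), fun m hm => h m (hm m)⟩) fun m hm => by
    by_contra hm0
    have h2 : B m m = 2 * q m := by
      have hmm : q (m + m) = 4 * q m := by
        rw [show m + m = (2 : ℚ) • m from (two_smul ℚ m).symm, q.map_smul]
        norm_num
      simp only [hB, QuadraticMap.polarBilin_apply_apply, polar, hmm]
      ring
    have := hm
    rw [h2] at this
    have := hqpos m hm0
    linarith
  set f := LinearMap.BilinForm.dualBasis B hBnd bV with hf
  -- key: for v ∈ M, the integer coordinates are given by B (f i) v
  have hcoord : ∀ (v : V) (hv : v ∈ M) (i : ι), ((bM.repr ⟨v, hv⟩ i : ℤ) : ℚ) = B (f i) v := by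
    intro v hv i
    have hsum : (∑ j, bM.repr ⟨v, hv⟩ j • bM j : M) = ⟨v, hv⟩ := bM.sum_repr _
    have hsumV : (∑ j, (bM.repr ⟨v, hv⟩ j : ℚ) • e j) = v := by
      have := congrArg (M.subtype) hsum
      simp only [map_sum, map_zsmul, Submodule.coe_subtype] at this
      simpa [he, ← Int.cast_smul_eq_zsmul ℚ] using this
    calc ((bM.repr ⟨v, hv⟩ i : ℤ) : ℚ)
        = ∑ j, (bM.repr ⟨v, hv⟩ j : ℚ) * (if j = i then 1 else 0) := by
          simp [mul_ite]
      _ = ∑ j, (bM.repr ⟨v, hv⟩ j : ℚ) * B (f i) (e j) := by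
          refine Finset.sum_congr rfl fun j _ => ?_
          congr 1
          rw [hf, show e j = bV j by rw [hbV, Module.Basis.coe_mk],
            LinearMap.BilinForm.apply_dualBasis_left]
      _ = B (f i) (∑ j, (bM.repr ⟨v, hv⟩ j : ℚ) • e j) := by
          rw [map_sum]
          exact Finset.sum_congr rfl fun j _ => by rw [LinearMap.map_smul, smul_eq_mul]
      _ = B (f i) v := by rw [hsumV]
  -- bound the coordinates
  have hbound : ∀ (v : V) (hv : v ∈ M ∧ q v ≤ c) (i : ι),
      ((bM.repr ⟨v, hv.1⟩ i : ℤ) : ℚ) ^ 2 ≤ 4 * q (f i) * c := by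
    intro v hv i
    rw [hcoord v hv.1 i]
    have hCS := polar_sq_le q hqpos (f i) v
    have : B (f i) v = polar q (f i) v := rfl
    rw [this]
    have := hq0 (f i)
    nlinarith [hv.2, hq0 v]
  -- injection into a finite product
  set T := fun i : ι => {a : ℤ | (a : ℚ) ^ 2 ≤ 4 * q (f i) * c}
  have hTfin : ∀ i, (T i).Finite := fun i => int_sq_le_finite _
  haveI : ∀ i, Finite (T i) := fun i => (hTfin i).to_subtype
  set Φ : {v : V | v ∈ M ∧ q v ≤ c} → (∀ i : ι, T i) :=
    fun v i => ⟨bM.repr ⟨v.1, v.2.1⟩ i, hbound v.1 v.2 i⟩ with hΦ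
  have hΦinj : Function.Injective Φ := by
    intro v w hvw
    have : ∀ i, bM.repr ⟨v.1, v.2.1⟩ i = bM.repr ⟨w.1, w.2.1⟩ i := by
      intro i
      have := congrFun hvw i
      simpa [hΦ] using congrArg Subtype.val this
    have hrepr : bM.repr ⟨v.1, v.2.1⟩ = bM.repr ⟨w.1, w.2.1⟩ := Finsupp.ext this
    have : (⟨v.1, v.2.1⟩ : M) = ⟨w.1, w.2.1⟩ := bM.repr.injective hrepr
    exact Subtype.ext (Subtype.mk_eq_mk.mp this)
  have : Finite {v : V | v ∈ M ∧ q v ≤ c} := Finite.of_injective Φ hΦinj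
  exact Set.toFinite _

lemma fixed_card_modEq (p : ℕ) (hp : p.Prime) (X : Type*) [Finite X] (e : Equiv.Perm X)
    (he : e ^ p = 1) :
    (Nat.card X : ℤ) ≡ (Nat.card {x : X // e x = x} : ℤ) [ZMOD (p : ℤ)] := by
  haveI : Fact p.Prime := ⟨hp⟩
  set G := Subgroup.zpowers e with hG
  have hPG : IsPGroup p G := by
    rintro ⟨g, hg⟩
    obtain ⟨m, hm⟩ := Subgroup.mem_zpowers_iff.mp hg
    refine ⟨1, Subtype.ext ?_⟩
    have : g ^ (p ^ 1) = 1 := by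
      rw [pow_one, ← hm, ← zpow_natCast, ← zpow_mul, mul_comm, zpow_mul, zpow_natCast, he,
        one_zpow]
    simpa using this
  have hmod := hPG.card_modEq_card_fixedPoints X
  have hcard : Nat.card (MulAction.fixedPoints G X) = Nat.card {x : X // e x = x} := by
    apply Nat.card_congr
    apply Equiv.subtypeEquivRight
    intro x
    constructor
    · intro hx
      exact hx ⟨e, Subgroup.mem_zpowers e⟩
    · intro hx
      rintro ⟨g, hg⟩
      obtain ⟨m, hm⟩ := Subgroup.mem_zpowers_iff.mp hg
      have : (e ^ m) x = x := Function.IsFixedPt.perm_zpow hx m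
      rw [hm] at this
      exact this
  rw [hcard] at hmod
  exact Int.natCast_modEq_iff.mpr hmod

lemma polar_self_eq (q : QuadraticForm ℚ V) (v : V) : polar q v v = 2 * q v := by
  have hmm : q (v + v) = 4 * q v := by
    rw [show v + v = (2 : ℚ) • v from (two_smul ℚ v).symm, q.map_smul]
    norm_num
  simp only [polar, hmm]
  ring

end Aux

open QuadraticMap


/-- Let `M` be a full positive definite integral lattice on a quadratic space `(V, q)` over `ℚ`
with an automorphism `σ` of odd prime order `p`, let `V₀` be the fixed space of `σ`,
`M₀ = M ∩ V₀`, and let `n ≥ 1`.  Then for every positive definite symmetric `n × n` integer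
matrix `S` one has the congruence `A(M, S) ≡ A(M₀, S) (mod p)`, where
`A(L, S) = #{(x₁, …, x_n) ∈ L^n : b (xᵢ) (xⱼ) = Sᵢⱼ}` (with `b = QuadraticMap.polar q`). -/
theorem representation_numbers_congruent_fixed_lattice
    (V : Type*) [AddCommGroup V] [Module ℚ V] [FiniteDimensional ℚ V]
    (q : QuadraticForm ℚ V) (hqpos : ∀ v : V, v ≠ 0 → 0 < q v)
    (p : ℕ) (hp : p.Prime) (hodd : Odd p)
    (σ : V ≃ₗ[ℚ] V) (hσq : ∀ v : V, q (σ v) = q v) (hσp : σ ^ p = 1)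
    (M : Submodule ℤ V) (hMfg : M.FG) (hMfull : Submodule.span ℚ (M : Set V) = ⊤)
    (hMint : ∀ x ∈ M, ∃ n : ℤ, q x = (n : ℚ))
    (hσM : ∀ x ∈ M, σ x ∈ M)
    (V₀ : Submodule ℚ V) (hV₀ : ∀ v : V, v ∈ V₀ ↔ σ v = v)
    (M₀ : Submodule ℤ V) (hM₀ : M₀ = M ⊓ V₀.restrictScalars ℤ)
    (n : ℕ) (hn : 1 ≤ n)
    (S : Matrix (Fin n) (Fin n) ℤ) (hSsymm : S.IsSymm)
    (hSpos : (S.map ((↑) : ℤ → ℚ)).PosDef) :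
    (Nat.card {x : Fin n → V // (∀ i, x i ∈ M) ∧
        ∀ i j, QuadraticMap.polar q (x i) (x j) = (S i j : ℚ)} : ℤ) ≡
      (Nat.card {x : Fin n → V // (∀ i, x i ∈ M₀) ∧
        ∀ i j, QuadraticMap.polar q (x i) (x j) = (S i j : ℚ)} : ℤ) [ZMOD (p : ℤ)] := by
  classical
  have hM₀mem : ∀ v : V, v ∈ M₀ ↔ v ∈ M ∧ σ v = v := by
    intro v
    rw [hM₀, Submodule.mem_inf, Submodule.restrictScalars_mem, hV₀]
  set X := {x : Fin n → V // (∀ i, x i ∈ M) ∧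
      ∀ i j, QuadraticMap.polar q (x i) (x j) = (S i j : ℚ)} with hX
  -- finiteness of X
  haveI hXfin : Finite X := by
    have hTfin : ∀ i : Fin n, {v : V | v ∈ M ∧ q v ≤ (S i i : ℚ) / 2}.Finite :=
      fun i => lattice_finite q hqpos M hMfg hMfull _
    haveI : ∀ i : Fin n, Finite {v : V | v ∈ M ∧ q v ≤ (S i i : ℚ) / 2} :=
      fun i => (hTfin i).to_subtype
    refine Finite.of_injective
      (fun x : X => fun i => (⟨x.1 i, x.2.1 i, ?_⟩ :
        {v : V | v ∈ M ∧ q v ≤ (S i i : ℚ) / 2})) ?_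
    · have h := x.2.2 i i
      rw [polar_self_eq] at h
      linarith
    · intro x y h
      exact Subtype.ext (funext fun i => congrArg Subtype.val (congrFun h i))
  -- polar is sigma-invariant
  have hpolarσ : ∀ u v : V, polar q (σ u) (σ v) = polar q u v := by
    intro u v
    simp only [polar, ← map_add σ, hσq]
  -- sigma-inverse preserves M
  have hσpow : ∀ (k : ℕ) (x : V), x ∈ M → (σ ^ k) x ∈ M := by
    intro k
    induction k with
    | zero => intro x hx; simpa using hx
    | succ k ih =>
      intro x hx
      rw [pow_succ']
      have : (σ * σ ^ k) x = σ ((σ ^ k) x) := rfl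
      rw [this]
      exact hσM _ (ih x hx)
  have hσsymmM : ∀ x ∈ M, σ.symm x ∈ M := by
    intro x hx
    have hps : p - 1 + 1 = p := Nat.succ_pred_eq_of_pos hp.pos
    have hsymm : σ.symm x = (σ ^ (p - 1)) x := by
      apply σ.injective
      rw [σ.apply_symm_apply]
      have h1 : σ ((σ ^ (p - 1)) x) = (σ ^ p) x := by
        rw [← hps, pow_succ']
        rfl
      rw [h1, hσp]
      rfl
    rw [hsymm]
    exact hσpow _ x hx
  -- the permutation of X
  set eX : Equiv.Perm X :=
    { toFun := fun x => ⟨fun i => σ (x.1 i),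
        ⟨fun i => hσM _ (x.2.1 i), fun i j => by rw [hpolarσ]; exact x.2.2 i j⟩⟩
      invFun := fun x => ⟨fun i => σ.symm (x.1 i),
        ⟨fun i => hσsymmM _ (x.2.1 i), fun i j => by
          have h := hpolarσ (σ.symm (x.1 i)) (σ.symm (x.1 j))
          rw [σ.apply_symm_apply, σ.apply_symm_apply] at h
          rw [← h]
          exact x.2.2 i j⟩⟩
      left_inv := fun x => Subtype.ext (funext fun i => σ.symm_apply_apply _)
      right_inv := fun x => Subtype.ext (funext fun i => σ.apply_symm_apply _) } with heX
  have hePow : ∀ (k : ℕ) (x : X) (i : Fin n), ((eX ^ k) x).1 i = (σ ^ k) (x.1 i) := by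
    intro k
    induction k with
    | zero => intro x i; rfl
    | succ k ih =>
      intro x i
      have h1 : (eX ^ (k + 1)) x = eX ((eX ^ k) x) := by
        rw [pow_succ']
        rfl
      rw [h1]
      have h2 : (eX ((eX ^ k) x)).1 i = σ (((eX ^ k) x).1 i) := rfl
      rw [h2, ih x i, pow_succ']
      rfl
  have heP : eX ^ p = 1 := by
    apply Equiv.ext
    intro x
    apply Subtype.ext
    funext i
    rw [Equiv.Perm.one_apply, hePow p x i, hσp]
    rfl
  have hmod := fixed_card_modEq p hp X eX heP
  -- identify fixed points with M₀-tuples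
  have hfixcard : Nat.card {x : X // eX x = x} =
      Nat.card {x : Fin n → V // (∀ i, x i ∈ M₀) ∧
        ∀ i j, QuadraticMap.polar q (x i) (x j) = (S i j : ℚ)} := by
    apply Nat.card_congr
    refine
      { toFun := fun x => ⟨x.1.1, ⟨fun i => ?_, x.1.2.2⟩⟩
        invFun := fun y => ⟨⟨y.1, ⟨fun i => ((hM₀mem _).1 (y.2.1 i)).1, y.2.2⟩⟩, ?_⟩
        left_inv := fun x => Subtype.ext (Subtype.ext rfl)
        right_inv := fun y => Subtype.ext rfl }
    · have hfix : σ (x.1.1 i) = x.1.1 i := by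
        have := congrArg Subtype.val x.2
        exact congrFun this i
      exact (hM₀mem _).2 ⟨x.1.2.1 i, hfix⟩
    · apply Subtype.ext
      funext i
      show σ (y.1 i) = y.1 i
      exact ((hM₀mem _).1 (y.2.1 i)).2
  rw [hfixcard] at hmod
  exact hmod
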